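/- Given an instance of 3-Partition with multiset A = {a_1,...,a_{3m}} summing to mT where T/4 < a_j < T/2 for all j, construct an LRSM instance with a project of capacity a_j for each j, and m locations each containing exactly T students. Then the 3-Partition instance has a solution if and only if the constructed LRSM instance has a feasible matching. -/

import Mathlib

open Finset
open scoped Classical

private lemma sigma_fin_eq {J : Type*} {w : J → ℕ} (x : Σ j : J, Fin (w j)) (j₀ : J)
    (h : x.1 = j₀) : x = ⟨j₀, Fin.cast (congrArg w h) x.2⟩ := by
  cases x
  subst h
  rfl

/-- Given a 3-Partition instance `(m, a, T)` with `Σ a = m·T` and `T/4 < a_j < T/2`,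
the LRSM instance with one project of capacity `a j` per element and `m` locations of
`T` students each (students are pairs `(location, index)`) has a feasible matching iff
the 3-Partition instance has a solution. -/
theorem stmt5 (m T : ℕ) (a : Fin (3 * m) → ℕ)
    (hsum : ∑ j, a j = m * T)
    (hbound : ∀ j, T < 4 * a j ∧ 2 * a j < T) :
    (∃ f : Fin (3 * m) → Fin m,
        (∀ i, (Finset.univ.filter fun j => f j = i).card = 3) ∧
        ∀ i, ∑ j ∈ Finset.univ.filter (fun j => f j = i), a j = T) ↔
      (∃ M : Fin m × Fin T → Fin (3 * m),
        (∀ p, (Finset.univ.filter fun s => M s = p).card = a p) ∧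
        ∀ s t, M s = M t → s.1 = t.1) := by
  constructor
  · rintro ⟨f, h3, hT⟩
    have key : ∀ i : Fin m, Fintype.card (Σ j : {j // f j = i}, Fin (a j.1)) = T := by
      intro i
      rw [Fintype.card_sigma]
      simp only [Fintype.card_fin]
      rw [← hT i]
      exact (Finset.sum_subtype _ (fun x => by simp) a).symm
    let e : ∀ i : Fin m, Fin T ≃ Σ j : {j // f j = i}, Fin (a j.1) :=
      fun i => (Fintype.equivFinOfCardEq (key i)).symm
    refine ⟨fun s => ((e s.1 s.2).1 : Fin (3 * m)), ?_, ?_⟩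
    · intro p
      have : (univ.filter fun s : Fin m × Fin T => ((e s.1 s.2).1 : Fin (3 * m)) = p).card
          = (univ : Finset (Fin (a p))).card := by
        refine Finset.card_bij'
          (i := fun s hs => Fin.cast (congrArg a (by simpa using hs)) (e s.1 s.2).2)
          (j := fun t _ => (f p, (e (f p)).symm ⟨⟨p, rfl⟩, t⟩)) ?_ ?_ ?_ ?_
        · intro s hs; exact mem_univ _
        · intro t ht
          simp only [mem_filter, mem_univ, true_and]
          rw [Equiv.apply_symm_apply]
        · intro s hs
          simp only [mem_filter, mem_univ, true_and] at hs
          have hloc : f p = s.1 := by rw [← hs]; exact (e s.1 s.2).1.2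
          cases' s with i t
          simp only at hloc hs ⊢
          subst hloc
          have : (⟨⟨p, rfl⟩, Fin.cast (congrArg a hs) (e (f p) t).2⟩ :
              Σ j : {j // f j = f p}, Fin (a j.1)) = e (f p) t := by
            have hfst : (e (f p) t).1 = ⟨p, rfl⟩ := Subtype.ext hs
            have := sigma_fin_eq (e (f p) t) ⟨p, rfl⟩ hfst
            exact this.symm
          rw [this, Equiv.symm_apply_apply]
        · intro t ht
          have hy : e (f p) ((e (f p)).symm ⟨⟨p, rfl⟩, t⟩) = ⟨⟨p, rfl⟩, t⟩ :=
            Equiv.apply_symm_apply _ _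
          apply Fin.ext
          rw [Fin.coe_cast]
          exact congrArg (fun z : (Σ j : {j // f j = f p}, Fin (a j.1)) => (z.2 : ℕ)) hy
      rw [this, card_univ, Fintype.card_fin]
    · intro s t h
      have hs : f ((e s.1 s.2).1 : Fin (3 * m)) = s.1 := (e s.1 s.2).1.2
      have ht : f ((e t.1 t.2).1 : Fin (3 * m)) = t.1 := (e t.1 t.2).1.2
      have h' : ((e s.1 s.2).1 : Fin (3 * m)) = ((e t.1 t.2).1 : Fin (3 * m)) := h
      rw [← hs, ← ht, h']
  · rintro ⟨M, hcard, hloc⟩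
    have apos : ∀ p, 0 < a p := by intro p; have := hbound p; omega
    have hne : ∀ p : Fin (3 * m), ∃ s, M s = p := by
      intro p
      by_contra h
      push_neg at h
      have h0 : (univ.filter fun s => M s = p).card = 0 := by
        rw [Finset.card_eq_zero, Finset.filter_eq_empty_iff]
        exact fun s _ => h s
      rw [hcard p] at h0
      have := apos p
      omega
    choose g hg using hne
    refine ⟨fun p => (g p).1, ?_, ?_⟩
    all_goals
      have hfM : ∀ s, (g (M s)).1 = s.1 := fun s => hloc _ _ (hg (M s))
      intro i
      have hTcard : (univ.filter fun s : Fin m × Fin T => s.1 = i).card = T := by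
        have huniv : (univ : Finset (Fin T)).card = T := by simp
        refine Eq.trans ?_ huniv
        refine Finset.card_bij' (i := fun s _ => s.2) (j := fun t _ => (i, t)) ?_ ?_ ?_ ?_
        · intro s hs; exact mem_univ _
        · intro t ht; simp
        · intro s hs
          simp only [mem_filter, mem_univ, true_and] at hs
          exact Prod.ext hs.symm rfl
        · intro t ht; rfl
      have hsplit : (univ.filter fun s : Fin m × Fin T => s.1 = i).card
          = ∑ j ∈ univ.filter (fun j => (g j).1 = i),
              ((univ.filter fun s : Fin m × Fin T => s.1 = i).filter fun s => M s = j).card := by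
        apply Finset.card_eq_sum_card_fiberwise
        intro s hs
        simp only [mem_coe, mem_filter, mem_univ, true_and] at hs ⊢
        rw [hfM s, hs]
      have hfib : ∀ j ∈ univ.filter (fun j => (g j).1 = i),
          ((univ.filter fun s : Fin m × Fin T => s.1 = i).filter fun s => M s = j).card = a j := by
        intro j hj
        simp only [mem_filter, mem_univ, true_and] at hj
        rw [← hcard j]
        congr 1
        ext s
        simp only [mem_filter, mem_univ, true_and, and_iff_right_iff_imp]
        intro hMs
        rw [← hfM s, hMs, hj]
      have hsumT : ∑ j ∈ univ.filter (fun j => (g j).1 = i), a j = T := by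
        calc ∑ j ∈ univ.filter (fun j => (g j).1 = i), a j
            = ∑ j ∈ univ.filter (fun j => (g j).1 = i),
                ((univ.filter fun s : Fin m × Fin T => s.1 = i).filter fun s => M s = j).card :=
              (Finset.sum_congr rfl hfib).symm
          _ = (univ.filter fun s : Fin m × Fin T => s.1 = i).card := hsplit.symm
          _ = T := hTcard
    · -- card = 3
      set S := univ.filter (fun j => (g j).1 = i) with hS
      have h1 : ∑ j ∈ S, (2 * a j + 1) ≤ ∑ j ∈ S, T :=
        Finset.sum_le_sum fun j _ => by have := (hbound j).2; omega
      have h2 : ∑ j ∈ S, (T + 1) ≤ ∑ j ∈ S, 4 * a j :=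
        Finset.sum_le_sum fun j _ => by have := (hbound j).1; omega
      have e1 : ∑ j ∈ S, (2 * a j + 1) = 2 * T + S.card := by
        rw [Finset.sum_add_distrib, ← Finset.mul_sum, hsumT]
        simp
      have e2 : ∑ j ∈ S, T = S.card * T := by
        rw [Finset.sum_const, smul_eq_mul]
      have e3 : ∑ j ∈ S, (T + 1) = S.card * (T + 1) := by
        rw [Finset.sum_const, smul_eq_mul]
      have e4 : ∑ j ∈ S, 4 * a j = 4 * T := by rw [← Finset.mul_sum, hsumT]
      rw [e1, e2] at h1
      rw [e3, e4] at h2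
      have hTpos : 0 < T := by
        have h0 : (0 : ℕ) < 3 * m := by have := i.2; omega
        have := hbound ⟨0, h0⟩
        omega
      nlinarith [S.card.zero_le]
    · exact hsumT
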